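/- arXiv:1707.09583 — 2 statements merged into one kernel-verified Lean document; each statement's English description precedes it below -/
import Mathlib

section
/- Let p > 1, C₅ > 0, and (D_j) a sequence of positive reals with D_{j+1} ≥ C₅ D_j^p/p^{2j} for all j ≥ 1. If log D₁ > S_p(∞) := Σ_{k=1}^∞ (2k log p − log C₅)/p^k, then D_j → ∞ as j → ∞. -/
open Filter Real

lemma auxSummable (A B r : ℝ) (hr : ‖r‖ < 1) :
    Summable (fun m : ℕ => (A + B * m) * r ^ (m + 1)) := by
  have h1 : Summable (fun m : ℕ => (m : ℝ) * r ^ m) := by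
    simpa using summable_pow_mul_geometric_of_norm_lt_one 1 hr
  have h2 : Summable (fun m : ℕ => r ^ m) := summable_geometric_of_norm_lt_one hr
  exact ((h2.mul_left (A * r)).add (h1.mul_left (B * r))).congr (fun m => by ring)

noncomputable def cc (p C₅ : ℝ) (j : ℕ) : ℝ := 2 * (j : ℝ) * Real.log p - Real.log C₅

noncomputable def TT (p C₅ : ℝ) (j : ℕ) : ℝ := ∑' m : ℕ, cc p C₅ (j + m) / p ^ (m + 1)

lemma TT_summable {p : ℝ} (C₅ : ℝ) (hp : 1 < p) (j : ℕ) :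
    Summable (fun m : ℕ => cc p C₅ (j + m) / p ^ (m + 1)) := by
  have hp0 : (0:ℝ) < p := lt_trans one_pos hp
  have hr : ‖p⁻¹‖ < 1 := by
    rw [Real.norm_eq_abs, abs_inv, abs_of_pos hp0]
    exact inv_lt_one_of_one_lt₀ hp
  refine (auxSummable (2 * j * Real.log p - Real.log C₅) (2 * Real.log p) p⁻¹ hr).congr
    (fun m => ?_)
  rw [inv_pow, ← div_eq_mul_inv]
  unfold cc
  push_cast
  ring

lemma TT_rec {p : ℝ} (C₅ : ℝ) (hp : 1 < p) (j : ℕ) :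
    p * TT p C₅ j = cc p C₅ j + TT p C₅ (j + 1) := by
  have hp0 : (0:ℝ) < p := lt_trans one_pos hp
  have hpne : p ≠ 0 := ne_of_gt hp0
  have heq : ∀ m : ℕ, p * (cc p C₅ (j + m) / p ^ (m + 1)) = cc p C₅ (j + m) / p ^ m := by
    intro m
    rw [pow_succ]
    field_simp
  have h1 : Summable (fun m : ℕ => cc p C₅ (j + m) / p ^ m) := by
    refine ((TT_summable C₅ hp j).mul_left p).congr (fun m => heq m)
  calc p * TT p C₅ j = ∑' m : ℕ, p * (cc p C₅ (j + m) / p ^ (m + 1)) := (tsum_mul_left).symm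
    _ = ∑' m : ℕ, cc p C₅ (j + m) / p ^ m := tsum_congr heq
    _ = cc p C₅ (j + 0) / p ^ 0 + ∑' m : ℕ, cc p C₅ (j + (m + 1)) / p ^ (m + 1) :=
        Summable.tsum_eq_zero_add h1
    _ = cc p C₅ j + TT p C₅ (j + 1) := by
        rw [pow_zero, Nat.add_zero, div_one]
        congr 1
        exact tsum_congr (fun m => by congr 2; omega)

noncomputable def KK (p C₅ : ℝ) : ℝ := ∑' m : ℕ, -|Real.log C₅| / p ^ (m + 1)

lemma KK_le_TT {p : ℝ} (C₅ : ℝ) (hp : 1 < p) (j : ℕ) : KK p C₅ ≤ TT p C₅ j := by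
  have hp0 : (0:ℝ) < p := lt_trans one_pos hp
  have hr : ‖p⁻¹‖ < 1 := by
    rw [Real.norm_eq_abs, abs_inv, abs_of_pos hp0]
    exact inv_lt_one_of_one_lt₀ hp
  have hlogp : 0 ≤ Real.log p := le_of_lt (Real.log_pos hp)
  have hsumK : Summable (fun m : ℕ => -|Real.log C₅| / p ^ (m + 1)) := by
    refine (auxSummable (-|Real.log C₅|) 0 p⁻¹ hr).congr (fun m => ?_)
    rw [inv_pow, ← div_eq_mul_inv]
    ring
  refine Summable.tsum_le_tsum (fun m => ?_) hsumK (TT_summable C₅ hp j)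
  have hpow : (0:ℝ) < p ^ (m + 1) := pow_pos hp0 _
  have h1 : -|Real.log C₅| ≤ cc p C₅ (j + m) := by
    unfold cc
    have h2 : -|Real.log C₅| ≤ -Real.log C₅ := by
      rw [neg_le_neg_iff]; exact le_abs_self _
    have h3 : (0:ℝ) ≤ 2 * ((j + m : ℕ) : ℝ) * Real.log p := by positivity
    linarith
  exact div_le_div_of_nonneg_right h1 hpow.le

theorem stmt_13 (p C₅ : ℝ) (hp : 1 < p) (hC : 0 < C₅)
    (D : ℕ → ℝ) (hDpos : ∀ j, 1 ≤ j → 0 < D j)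
    (hrec : ∀ j, 1 ≤ j → D (j + 1) ≥ C₅ * D j ^ p / p ^ (2 * j))
    (hD1 : Real.log (D 1) >
      ∑' k : ℕ, (2 * ((k : ℝ) + 1) * Real.log p - Real.log C₅) / p ^ (k + 1)) :
    Filter.Tendsto D Filter.atTop Filter.atTop := by
  have hp0 : (0:ℝ) < p := lt_trans one_pos hp
  have hpne : p ≠ 0 := ne_of_gt hp0
  -- identify the hypothesis sum with TT p C₅ 1
  have hT1 : TT p C₅ 1 = ∑' k : ℕ, (2 * ((k : ℝ) + 1) * Real.log p - Real.log C₅) / p ^ (k + 1) := by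
    unfold TT cc
    exact tsum_congr (fun m => by push_cast; ring_nf)
  set ε : ℝ := Real.log (D 1) - TT p C₅ 1 with hεdef
  have hε : 0 < ε := by rw [hεdef, hT1]; linarith
  -- main induction
  have key : ∀ n : ℕ, p ^ n * ε ≤ Real.log (D (n + 1)) - TT p C₅ (n + 1) := by
    intro n
    induction n with
    | zero => simp [hεdef]
    | succ n ih =>
      set j := n + 1 with hj
      have hj1 : 1 ≤ j := Nat.le_add_left 1 n
      have hDj : 0 < D j := hDpos j hj1
      have hrpos : 0 < C₅ * D j ^ p / p ^ (2 * j) := by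
        have : (0:ℝ) < D j ^ p := Real.rpow_pos_of_pos hDj p
        positivity
      have hlog1 : Real.log (C₅ * D j ^ p / p ^ (2 * j)) ≤ Real.log (D (j + 1)) :=
        Real.log_le_log hrpos (hrec j hj1)
      have hlog2 : Real.log (C₅ * D j ^ p / p ^ (2 * j))
          = p * Real.log (D j) - cc p C₅ j := by
        rw [Real.log_div (by positivity) (by positivity),
          Real.log_mul (ne_of_gt hC) (ne_of_gt (Real.rpow_pos_of_pos hDj p)),
          Real.log_rpow hDj, Real.log_pow]
        unfold cc
        push_cast
        ring
      have hTrec := TT_rec C₅ hp j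
      have : p * (Real.log (D j) - TT p C₅ j) ≤ Real.log (D (j + 1)) - TT p C₅ (j + 1) := by
        nlinarith [hlog1, hlog2, hTrec]
      calc p ^ (n + 1) * ε = p * (p ^ n * ε) := by ring
        _ ≤ p * (Real.log (D j) - TT p C₅ j) :=
            mul_le_mul_of_nonneg_left ih (le_of_lt hp0)
        _ ≤ Real.log (D (j + 1)) - TT p C₅ (j + 1) := this
  -- lower bound on log D (n+1)
  have lb : ∀ n : ℕ, p ^ n * ε + KK p C₅ ≤ Real.log (D (n + 1)) := by
    intro n
    have h1 := key n
    have h2 := KK_le_TT C₅ hp (n + 1)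
    linarith
  -- p^n ε + K → ∞
  have hgrow : Tendsto (fun n : ℕ => p ^ n * ε + KK p C₅) atTop atTop := by
    apply tendsto_atTop_add_const_right
    exact (tendsto_pow_atTop_atTop_of_one_lt hp).atTop_mul_const hε
  have hlogD : Tendsto (fun n : ℕ => Real.log (D (n + 1))) atTop atTop :=
    tendsto_atTop_mono lb hgrow
  have hD' : Tendsto (fun n : ℕ => D (n + 1)) atTop atTop := by
    have hcomp : Tendsto (fun n : ℕ => Real.exp (Real.log (D (n + 1)))) atTop atTop :=
      Real.tendsto_exp_atTop.comp hlogD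
    refine hcomp.congr (fun n => ?_)
    exact Real.exp_log (hDpos (n + 1) (Nat.le_add_left 1 n))
  exact (Filter.tendsto_add_atTop_iff_nat 1).mp hD'
end

section
/- Let F₁ : [0,∞) → ℝ be continuous with F₁(0) > 0, and suppose for all t ≥ 0: e^{2t} F₁(t) ≥ F₁(0) + c∫₀ᵗ e^{2s} ds + ∫₀ᵗ (e^{2s}/m(s)) ∫₀^s m(r) μ(1+r)^{−β} F₁(r) dr ds, where c ≥ 0, μ > 0, β > 1, and m(t) = exp(μ(1+t)^{1-β}/(1−β)) > 0. Then F₁(t) > 0 for all t ≥ 0. -/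
theorem stmt_19 (μ β c : ℝ) (hμ : 0 < μ) (hβ : 1 < β) (hc : 0 ≤ c)
    (m : ℝ → ℝ) (hm : ∀ t, m t = Real.exp (μ * (1 + t) ^ (1 - β) / (1 - β)))
    (F₁ : ℝ → ℝ) (hcont : ContinuousOn F₁ (Set.Ici 0)) (hF₁0 : 0 < F₁ 0)
    (hineq : ∀ t, 0 ≤ t →
      Real.exp (2 * t) * F₁ t ≥ F₁ 0 + c * (∫ s in (0 : ℝ)..t, Real.exp (2 * s)) +
        ∫ s in (0 : ℝ)..t, (Real.exp (2 * s) / m s) *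
          ∫ r in (0 : ℝ)..s, m r * (μ * (1 + r) ^ (-β)) * F₁ r) :
    ∀ t, 0 ≤ t → 0 < F₁ t := by
  by_contra hcon
  push_neg at hcon
  obtain ⟨t, ht, hFt⟩ := hcon
  set S : Set ℝ := {u | 0 ≤ u ∧ F₁ u ≤ 0} with hS
  have hSne : S.Nonempty := ⟨t, ht, hFt⟩
  have hSbdd : BddBelow S := ⟨0, fun u hu => hu.1⟩
  have hSclosed : IsClosed S := by
    have heq : S = Set.Ici 0 ∩ F₁ ⁻¹' Set.Iic 0 := by
      ext u; simp [hS, Set.mem_preimage, and_comm]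
    rw [heq]
    exact hcont.preimage_isClosed_of_isClosed isClosed_Ici isClosed_Iic
  set t₀ := sInf S with ht₀def
  have ht₀mem : t₀ ∈ S := hSclosed.csInf_mem hSne hSbdd
  have ht₀0 : 0 ≤ t₀ := ht₀mem.1
  have ht₀pos : 0 < t₀ := by
    rcases lt_or_eq_of_le ht₀0 with h | h
    · exact h
    · exact absurd (h ▸ ht₀mem.2) (not_le.mpr hF₁0)
  have hpos : ∀ u, 0 ≤ u → u < t₀ → 0 < F₁ u := by
    intro u hu hut
    by_contra hne
    push_neg at hne
    exact absurd (csInf_le hSbdd ⟨hu, hne⟩) (not_le.mpr hut)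
  -- F₁ t₀ ≥ 0 by continuity
  have hF₁t₀nonneg : 0 ≤ F₁ t₀ := by
    have hcl : t₀ ∈ closure (Set.Ico 0 t₀) := by
      rw [closure_Ico (ne_of_lt ht₀pos)]
      exact ⟨ht₀0, le_refl _⟩
    have hne : (nhdsWithin t₀ (Set.Ico 0 t₀)).NeBot :=
      mem_closure_iff_nhdsWithin_neBot.mp hcl
    have hlim : Filter.Tendsto F₁ (nhdsWithin t₀ (Set.Ico 0 t₀)) (nhds (F₁ t₀)) :=
      (hcont t₀ ht₀0).mono (fun u hu => hu.1)
    exact ge_of_tendsto hlim (Filter.eventually_of_mem self_mem_nhdsWithin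
      (fun u hu => (hpos u hu.1 hu.2).le))
  have hnonneg : ∀ u, 0 ≤ u → u ≤ t₀ → 0 ≤ F₁ u := by
    intro u hu hut
    rcases lt_or_eq_of_le hut with h | h
    · exact (hpos u hu h).le
    · exact h ▸ hF₁t₀nonneg
  have hkey := hineq t₀ ht₀0
  have h1 : 0 ≤ c * (∫ s in (0 : ℝ)..t₀, Real.exp (2 * s)) := by
    apply mul_nonneg hc
    exact intervalIntegral.integral_nonneg ht₀0 (fun u _ => (Real.exp_pos _).le)
  have h2 : 0 ≤ ∫ s in (0 : ℝ)..t₀, (Real.exp (2 * s) / m s) *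
      ∫ r in (0 : ℝ)..s, m r * (μ * (1 + r) ^ (-β)) * F₁ r := by
    apply intervalIntegral.integral_nonneg ht₀0
    intro s hs
    apply mul_nonneg
    · apply div_nonneg (Real.exp_pos _).le
      rw [hm s]; exact (Real.exp_pos _).le
    · apply intervalIntegral.integral_nonneg hs.1
      intro r hr
      apply mul_nonneg
      apply mul_nonneg
      · rw [hm r]; exact (Real.exp_pos _).le
      · apply mul_nonneg hμ.le
        have : (0:ℝ) < 1 + r := by linarith [hr.1]
        exact (Real.rpow_pos_of_pos this _).le
      · exact hnonneg r hr.1 (le_trans hr.2 hs.2)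
  have hgt : 0 < Real.exp (2 * t₀) * F₁ t₀ := by
    calc (0:ℝ) < F₁ 0 := hF₁0
    _ ≤ F₁ 0 + c * (∫ s in (0 : ℝ)..t₀, Real.exp (2 * s)) +
        ∫ s in (0 : ℝ)..t₀, (Real.exp (2 * s) / m s) *
          ∫ r in (0 : ℝ)..s, m r * (μ * (1 + r) ^ (-β)) * F₁ r := by linarith
    _ ≤ Real.exp (2 * t₀) * F₁ t₀ := hkey
  nlinarith [Real.exp_pos (2*t₀), ht₀mem.2, mul_nonpos_of_nonneg_of_nonpos (Real.exp_pos (2*t₀)).le ht₀mem.2]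
end
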